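/- Let x be an alcove with P(x)(1) = 1. Then for all i, j ∈ {1,...,n}, i ⊴_x j if and only if c^{-1}(i) ⊴_{rot(x)} c^{-1}(j), where c is the n-cycle (1 2 ... n). -/

import Mathlib

open Finset

/-- Standard basis vector `e_j` in `ℤⁿ`. -/
def ev (n : ℕ) (j : Fin n) : Fin n → ℤ := fun k => if k = j then 1 else 0

/-- The coweight `ϖ_t = e_1 + ⋯ + e_t` (t ones followed by zeros). -/
def varpi (n t : ℕ) : Fin n → ℤ := fun j => if (j : ℕ) < t then 1 else 0

/-- Dominance order `μ ⪯ λ`: equal total sums, partial sums of `μ` bounded by those of `λ`. -/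
def DomLE {n : ℕ} (μ lam : Fin n → ℤ) : Prop :=
  (∑ i, μ i = ∑ i, lam i) ∧
  ∀ k : Fin n, ∑ i ∈ Finset.Iic k, μ i ≤ ∑ i ∈ Finset.Iic k, lam i

/-- A coweight is dominant iff its coordinates are weakly decreasing. -/
def IsDominant {n : ℕ} (v : Fin n → ℤ) : Prop := ∀ i j : Fin n, i ≤ j → v j ≤ v i

/-- The weakly decreasing rearrangement `dom(v)` of `v`. -/
noncomputable def domOf {n : ℕ} (v : Fin n → ℤ) : Fin n → ℤ :=
  v ∘ Tuple.sort (fun i => -v i)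

/-- `succA x i` is `x^{(i+1)}`, with the convention `x^{(n+1)} = x^{(1)} + (1,…,1)`. -/
def succA {n : ℕ} (x : Fin n → Fin n → ℤ) (i : Fin n) : Fin n → ℤ :=
  if h : (i : ℕ) + 1 < n then x ⟨(i : ℕ) + 1, h⟩ else fun j => x ⟨0, i.pos⟩ j + 1

/-- A tuple `(x^{(1)},…,x^{(n)})` is an alcove. -/
def IsAlcove {n : ℕ} (x : Fin n → Fin n → ℤ) : Prop :=
  (∀ i : Fin n, ∀ j, x i j ≤ succA x i j) ∧
  (∀ i : Fin n, (i : ℕ) + 1 < n → ∑ j, succA x i j = (∑ j, x i j) + 1)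

/-- `P` is the permutation `P(x)` of the alcove `x`: `x^{(i+1)} = x^{(i)} + e_{P(x)(i)}`. -/
def IsPermOf {n : ℕ} (x : Fin n → Fin n → ℤ) (P : Equiv.Perm (Fin n)) : Prop :=
  ∀ i : Fin n, ∀ j, succA x i j = x i j + ev n (P i) j

/-- A permutation acts on `ℤⁿ` by permuting coordinates: `(σv)_{σ(i)} = v_i`. -/
def permAct {n : ℕ} (σ : Equiv.Perm (Fin n)) (v : Fin n → ℤ) : Fin n → ℤ :=
  fun j => v (σ.symm j)

/-- The `n`-cycle `c = (1 2 ⋯ n)`. -/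
def cyc (n : ℕ) [NeZero n] : Equiv.Perm (Fin n) := Equiv.addRight 1

/-- Rotation of alcoves. -/
def rotA {n : ℕ} [NeZero n] (x : Fin n → Fin n → ℤ) : Fin n → Fin n → ℤ := fun i =>
  if h : (i : ℕ) + 1 < n then
    permAct (cyc n)⁻¹ (fun j => x ⟨(i : ℕ) + 1, h⟩ j - varpi n 1 j)
  else
    fun j => permAct (cyc n)⁻¹ (x 0) j + varpi n (n - 1) j

/-- An alcove is `λ`-permissible if `dom(x^{(i)} - ϖ_{i-1}) ⪯ λ` for all `i`. -/
noncomputable def Permissible {n : ℕ} (lam : Fin n → ℤ) (x : Fin n → Fin n → ℤ) : Prop :=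
  ∀ i : Fin n, DomLE (domOf (fun j => x i j - varpi n (i : ℕ) j)) lam

/-- The Kottwitz–Rapoport relation `i ⊴_x j` (six-case rule). -/
def TriLE {n : ℕ} (x : Fin n → Fin n → ℤ) (P : Equiv.Perm (Fin n)) (i j : Fin n) : Prop :=
  (x ⟨0, i.pos⟩ j < x ⟨0, i.pos⟩ i) ∨
  (x ⟨0, i.pos⟩ i = x ⟨0, i.pos⟩ j ∧
    ((P.symm i < i ∧ P.symm j < j ∧ j ≤ i) ∨
     (P.symm i < i ∧ j ≤ P.symm j) ∨
     (P.symm i = i ∧ P.symm j = j ∧ i = j) ∨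
     (P.symm i = i ∧ j < P.symm j) ∨
     (i < P.symm i ∧ j < P.symm j ∧ j ≤ i)))
section Aux
variable {n : ℕ} [NeZero n]

lemma cyc_apply (a : Fin n) : cyc n a = a + 1 := rfl

lemma cyc_symm_apply (a : Fin n) : (cyc n).symm a = a - 1 := by
  show a + -1 = a - 1
  exact (sub_eq_add_neg a 1).symm

lemma val_sub_one (a : Fin n) :
    (a - 1).val = if a.val = 0 then n - 1 else a.val - 1 := by
  have hn := NeZero.pos n
  have ha := a.isLt
  rw [Fin.sub_def]
  show (n - (1:Fin n).val + a.val) % n = _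
  have h1 : (1:Fin n).val = 1 % n := rfl
  rcases Nat.lt_or_ge 1 n with h2 | h2
  · rw [h1, Nat.mod_eq_of_lt h2]
    split <;> rename_i h3
    · rw [h3, Nat.add_zero, Nat.mod_eq_of_lt (by omega)]
    · rw [Nat.mod_eq_sub_mod (by omega), Nat.mod_eq_of_lt (by omega)]
      omega
  · interval_cases n
    simp [Nat.lt_one_iff.mp ha]

lemma csymm_lt_iff {a b : Fin n} (ha : a ≠ 0) (hb : b ≠ 0) :
    (cyc n).symm a < (cyc n).symm b ↔ a < b := by
  have ha' : a.val ≠ 0 := fun h => ha (Fin.ext h)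
  have hb' : b.val ≠ 0 := fun h => hb (Fin.ext h)
  rw [cyc_symm_apply, cyc_symm_apply, Fin.lt_def, Fin.lt_def,
    val_sub_one, val_sub_one, if_neg ha', if_neg hb']
  omega

lemma csymm_le_iff {a b : Fin n} (ha : a ≠ 0) (hb : b ≠ 0) :
    (cyc n).symm a ≤ (cyc n).symm b ↔ a ≤ b := by
  have ha' : a.val ≠ 0 := fun h => ha (Fin.ext h)
  have hb' : b.val ≠ 0 := fun h => hb (Fin.ext h)
  rw [cyc_symm_apply, cyc_symm_apply, Fin.le_def, Fin.le_def,
    val_sub_one, val_sub_one, if_neg ha', if_neg hb']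
  have := a.isLt; have := b.isLt
  omega

lemma csymm_eq_iff {a b : Fin n} : (cyc n).symm a = (cyc n).symm b ↔ a = b :=
  (Equiv.injective _).eq_iff

lemma le_csymm_zero (b : Fin n) : b ≤ (cyc n).symm 0 := by
  rw [cyc_symm_apply, Fin.le_def, val_sub_one, if_pos (by simp)]
  have := b.isLt; omega

lemma csymm_zero_le_iff {b : Fin n} : (cyc n).symm 0 ≤ (cyc n).symm b ↔ b = 0 := by
  constructor
  · intro h
    by_contra hb
    have h2 := le_csymm_zero ((cyc n).symm b)
    have : (cyc n).symm 0 = (cyc n).symm b := le_antisymm h h2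
    exact hb (csymm_eq_iff.mp this).symm
  · rintro rfl; exact le_refl _

omit [NeZero n] in
lemma perm_unique {x : Fin n → Fin n → ℤ} {P Q : Equiv.Perm (Fin n)}
    (hP : IsPermOf x P) (hQ : IsPermOf x Q) : P = Q := by
  apply Equiv.ext
  intro i
  have h2 := hQ i (P i)
  rw [hP i (P i)] at h2
  by_cases h : P i = Q i
  · exact h
  · simp [ev, h] at h2

lemma ev_csymm (t j : Fin n) :
    ev n ((cyc n)⁻¹ t) j = if cyc n j = t then 1 else 0 := by
  show (if j = (cyc n).symm t then (1:ℤ) else 0) = _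
  rcases eq_or_ne ((cyc n) j) t with h | h
  · rw [if_pos h, if_pos ((Equiv.eq_symm_apply (cyc n)).mpr h)]
  · rw [if_neg h, if_neg (fun hh => h ((Equiv.eq_symm_apply (cyc n)).mp hh))]

lemma add_one_eq_mk {i : Fin n} (h : (i:ℕ) + 1 < n) : i + 1 = ⟨(i:ℕ) + 1, h⟩ := by
  apply Fin.ext
  rw [Fin.add_def]
  show ((i:ℕ) + ((1:Fin n):ℕ)) % n = (i:ℕ) + 1
  have h1 : ((1:Fin n):ℕ) = 1 := by
    show 1 % n = 1
    exact Nat.mod_eq_of_lt (by omega)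
  rw [h1, Nat.mod_eq_of_lt h]

lemma add_one_eq_zero {i : Fin n} (h : ¬ (i:ℕ) + 1 < n) : i + 1 = 0 := by
  have hi := i.isLt
  apply Fin.ext
  rw [Fin.add_def]
  show ((i:ℕ) + ((1:Fin n):ℕ)) % n = ((0:Fin n):ℕ)
  have h1 : ((1:Fin n):ℕ) = 1 % n := rfl
  have h0 : ((0:Fin n):ℕ) = 0 := rfl
  rw [h1, h0]
  rcases Nat.lt_or_ge 1 n with h2 | h2
  · rw [Nat.mod_eq_of_lt h2]
    have h3 : (i:ℕ) + 1 = n := by omega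
    rw [h3, Nat.mod_self]
  · have hn1 : n = 1 := by omega
    subst hn1
    simp

lemma add_one_val_eq {j : Fin n} (h : (j:ℕ) + 1 < n) : ((j + 1 : Fin n) : ℕ) = (j:ℕ) + 1 := by
  rw [add_one_eq_mk h]

lemma mk_zero_eq (h : 0 < n) : (⟨0, h⟩ : Fin n) = 0 := rfl

end Aux
section Aux2
variable {n : ℕ} [NeZero n]

lemma varpi_one_eq (k : Fin n) : varpi n 1 k = ev n 0 k := by
  unfold varpi ev
  rcases eq_or_ne k 0 with rfl | h
  · simp
  · have h' : (k:ℕ) ≠ 0 := fun hh => h (Fin.ext hh)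
    rw [if_neg (by omega : ¬ (k:ℕ) < 1), if_neg h]

lemma cyc_eq_zero_iff (k : Fin n) : cyc n k = 0 ↔ ¬ ((k:ℕ) + 1 < n) := by
  constructor
  · intro h hlt
    rw [cyc_apply, add_one_eq_mk hlt] at h
    have := congrArg Fin.val h
    simp at this
  · intro h
    rw [cyc_apply, add_one_eq_zero h]

lemma varpi_compl (j : Fin n) :
    varpi n (n - 1) j = 1 - varpi n 1 (cyc n j) := by
  unfold varpi
  by_cases h : (j:ℕ) + 1 < n
  · rw [cyc_apply, add_one_eq_mk h]
    rw [if_pos (by omega : (j:ℕ) < n - 1), if_neg (by simp)]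
    norm_num
  · have hj := j.isLt
    have hc : cyc n j = 0 := (cyc_eq_zero_iff j).mpr h
    rw [hc, if_neg (by omega : ¬ (j:ℕ) < n - 1), if_pos (by simp)]
    norm_num

lemma rotA_eq (x : Fin n → Fin n → ℤ) (i j : Fin n) :
    rotA x i j = succA x i (cyc n j) - varpi n 1 (cyc n j) := by
  unfold rotA succA
  by_cases h : (i:ℕ) + 1 < n
  · rw [dif_pos h, dif_pos h]
    rfl
  · rw [dif_neg h, dif_neg h]
    show permAct (cyc n)⁻¹ (x 0) j + varpi n (n-1) j = _
    have hperm : permAct (cyc n)⁻¹ (x 0) j = x 0 (cyc n j) := rfl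
    have hz : (⟨0, i.pos⟩ : Fin n) = 0 := by apply Fin.ext; simp
    rw [hperm, varpi_compl, hz]
    ring

lemma perm_rot {x : Fin n → Fin n → ℤ} {P : Equiv.Perm (Fin n)}
    (hP : IsPermOf x P) :
    IsPermOf (rotA x) ((cyc n)⁻¹ * P * cyc n) := by
  intro i j
  have key : ((cyc n)⁻¹ * P * cyc n) i = (cyc n)⁻¹ (P (cyc n i)) := rfl
  rw [key, ev_csymm]
  by_cases h : (i:ℕ) + 1 < n
  · have e0 : succA (rotA x) i j = rotA x ⟨(i:ℕ)+1, h⟩ j := by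
      rw [succA]; rw [dif_pos h]
    have e1 : succA x i (cyc n j) = x ⟨(i:ℕ)+1, h⟩ (cyc n j) := by
      rw [succA]; rw [dif_pos h]
    rw [e0, rotA_eq, rotA_eq, e1]
    have e2 := hP ⟨(i:ℕ)+1, h⟩ (cyc n j)
    rw [e2, ev, ← add_one_eq_mk h, ← cyc_apply]
    ring
  · have e0 : succA (rotA x) i j = rotA x ⟨0, i.pos⟩ j + 1 := by
      rw [succA]; rw [dif_neg h]
    have e1 : succA x i (cyc n j) = x ⟨0, i.pos⟩ (cyc n j) + 1 := by
      rw [succA]; rw [dif_neg h]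
    rw [e0, rotA_eq, rotA_eq, e1]
    have e2 := hP ⟨0, i.pos⟩ (cyc n j)
    rw [e2, ev]
    have hz : (⟨0, i.pos⟩ : Fin n) = 0 := by apply Fin.ext; simp
    have hc : cyc n i = 0 := (cyc_eq_zero_iff i).mpr h
    rw [hz, hc]
    ring

lemma rot_row0 {x : Fin n → Fin n → ℤ} {P : Equiv.Perm (Fin n)}
    (hP : IsPermOf x P) (hP0 : P 0 = 0) (k : Fin n) :
    rotA x 0 ((cyc n).symm k) = x 0 k := by
  rw [rotA_eq, Equiv.apply_symm_apply, hP 0 k, hP0, varpi_one_eq]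
  ring

end Aux2
theorem triLE_rot_of_fix_one (n : ℕ) [NeZero n] (x : Fin n → Fin n → ℤ) (hx : IsAlcove x)
    (P P' : Equiv.Perm (Fin n)) (hP : IsPermOf x P) (hP' : IsPermOf (rotA x) P')
    (hP0 : P 0 = 0) :
    ∀ i j : Fin n,
      TriLE x P i j ↔ TriLE (rotA x) P' ((cyc n).symm i) ((cyc n).symm j) := by
  have hPP' : P' = (cyc n)⁻¹ * P * cyc n := perm_unique hP' (perm_rot hP)
  subst hPP'
  have hs : ∀ k : Fin n,
      Equiv.symm ((cyc n)⁻¹ * P * cyc n) ((cyc n).symm k) = (cyc n).symm (P.symm k) := by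
    intro k
    show ((cyc n)⁻¹ * P * cyc n)⁻¹ ((cyc n)⁻¹ k) = _
    rw [mul_inv_rev, mul_inv_rev, inv_inv]
    show (cyc n)⁻¹ (P⁻¹ ((cyc n) ((cyc n)⁻¹ k))) = _
    rw [show (cyc n) ((cyc n)⁻¹ k) = k from (cyc n).apply_symm_apply k]
    rfl
  have h0 : P.symm 0 = 0 := (Equiv.symm_apply_eq P).mpr hP0.symm
  have hz : ∀ a : Fin n, P.symm a = 0 ↔ a = 0 := by
    intro a
    constructor
    · intro h
      have : P.symm a = P.symm 0 := by rw [h0, h]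
      exact P.symm.injective this
    · rintro rfl; exact h0
  have hzz : ∀ a : Fin n, a ≠ 0 → P.symm a ≠ 0 := fun a ha h => ha ((hz a).mp h)
  have hmk : ∀ (h : 0 < n), (⟨0, h⟩ : Fin n) = 0 := fun h => by apply Fin.ext; simp
  have hr : ∀ k : Fin n, rotA x 0 ((cyc n).symm k) = x 0 k := rot_row0 hP hP0
  -- atom lemmas
  have aLT : ∀ a : Fin n, (P.symm a < a ↔ (cyc n).symm (P.symm a) < (cyc n).symm a) := by
    intro a
    rcases eq_or_ne a 0 with rfl | ha
    · rw [h0]; simp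
    · exact (csymm_lt_iff (hzz a ha) ha).symm
  have aGT : ∀ a : Fin n, (a < P.symm a ↔ (cyc n).symm a < (cyc n).symm (P.symm a)) := by
    intro a
    rcases eq_or_ne a 0 with rfl | ha
    · rw [h0]; simp
    · exact (csymm_lt_iff ha (hzz a ha)).symm
  have aLE : ∀ a : Fin n, (a ≤ P.symm a ↔ (cyc n).symm a ≤ (cyc n).symm (P.symm a)) := by
    intro a
    rcases eq_or_ne a 0 with rfl | ha
    · rw [h0]; simp
    · exact (csymm_le_iff ha (hzz a ha)).symm
  have aEQ : ∀ a : Fin n, (P.symm a = a ↔ (cyc n).symm (P.symm a) = (cyc n).symm a) :=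
    fun a => csymm_eq_iff.symm
  intro i j
  unfold TriLE
  simp only [hmk, hr, hs]
  apply or_congr Iff.rfl
  apply and_congr Iff.rfl
  apply or_congr
  · -- case 1
    constructor
    · rintro ⟨h1, h2, h3⟩
      have hi : i ≠ 0 := by rintro rfl; rw [h0] at h1; exact absurd h1 (lt_irrefl _)
      have hj : j ≠ 0 := by rintro rfl; rw [h0] at h2; exact absurd h2 (lt_irrefl _)
      exact ⟨(aLT i).mp h1, (aLT j).mp h2, (csymm_le_iff hj hi).mpr h3⟩
    · rintro ⟨h1, h2, h3⟩
      have h1' := (aLT i).mpr h1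
      have h2' := (aLT j).mpr h2
      have hi : i ≠ 0 := by rintro rfl; rw [h0] at h1'; exact absurd h1' (lt_irrefl _)
      have hj : j ≠ 0 := by rintro rfl; rw [h0] at h2'; exact absurd h2' (lt_irrefl _)
      exact ⟨h1', h2', (csymm_le_iff hj hi).mp h3⟩
  apply or_congr
  · exact and_congr (aLT i) (aLE j)
  apply or_congr
  · exact and_congr (aEQ i) (and_congr (aEQ j) csymm_eq_iff.symm)
  apply or_congr
  · exact and_congr (aEQ i) (aGT j)
  · -- case 5
    constructor
    · rintro ⟨h1, h2, h3⟩
      have hi : i ≠ 0 := by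
        rintro rfl; rw [h0] at h1; exact absurd h1 (lt_irrefl _)
      have hj : j ≠ 0 := by
        rintro rfl; rw [h0] at h2; exact absurd h2 (lt_irrefl _)
      exact ⟨(aGT i).mp h1, (aGT j).mp h2, (csymm_le_iff hj hi).mpr h3⟩
    · rintro ⟨h1, h2, h3⟩
      have h1' := (aGT i).mpr h1
      have h2' := (aGT j).mpr h2
      have hi : i ≠ 0 := by rintro rfl; rw [h0] at h1'; exact absurd h1' (lt_irrefl _)
      have hj : j ≠ 0 := by rintro rfl; rw [h0] at h2'; exact absurd h2' (lt_irrefl _)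
      exact ⟨h1', h2', (csymm_le_iff hj hi).mp h3⟩
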